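/- Let aⁿ = (a₁ⁿ, a₂ⁿ, a₃ⁿ) ∈ (0,∞)³ be a sequence with aⁿ → (a₁, a₂, 0) as n → ∞, where a₁, a₂ > 0, and let Rⁿ ∈ SO(3) with Rⁿ → R ∈ SO(3). Let μₙ be the normalised restriction of Lebesgue measure to the ellipsoid Eⁿ = Rⁿ D(aⁿ) B̄. Then μₙ converges narrowly to the semi-ellipsoid law μ_{Ẽ} associated with (a₁, a₂, R): for every bounded continuous f: ℝ³ → ℝ, ∫ f dμₙ → (3/(2π a₁ a₂)) ∫_{{x₁²/a₁² + x₂²/a₂² ≤ 1}} f(R(x₁, x₂, 0)) √(1 − x₁²/a₁² − x₂²/a₂²) dx₁ dx₂. -/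

import Mathlib

open MeasureTheory Metric Matrix
open scoped ENNReal

noncomputable section

abbrev E3 := EuclideanSpace ℝ (Fin 3)

/-- The anisotropic kernel `W(x) = |x|⁻¹ Ψ(x/|x|)` as a real-valued function. -/
def W (Ψ : E3 → ℝ) (x : E3) : ℝ := ‖x‖⁻¹ * Ψ (‖x‖⁻¹ • x)

open Classical in
/-- The kernel with the convention `W(0) = +∞`, with values in `ℝ≥0∞`. -/
def kern (Ψ : E3 → ℝ) (x : E3) : ℝ≥0∞ :=
  if x = 0 then ∞ else ENNReal.ofReal (W Ψ x)

/-- The nonlocal energy `I(μ) = ∬ W(x-y) dμ(y) dμ(x) + ∫ |x|² dμ(x)`. -/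
def energy (Ψ : E3 → ℝ) (μ : Measure E3) : ℝ≥0∞ :=
  (∫⁻ x, ∫⁻ y, kern Ψ (x - y) ∂μ ∂μ) + ∫⁻ x, ENNReal.ofReal (‖x‖ ^ 2) ∂μ

/-- Fourier transform with the convention `φ̂(ξ) = (2π)^{-3/2} ∫ φ(x) e^{-i ξ·x} dx`. -/
def ftransform (φ : E3 → ℂ) (ξ : E3) : ℂ :=
  ((((2 * Real.pi) ^ ((3:ℝ)/2))⁻¹ : ℝ) : ℂ) *
    ∫ x : E3, φ x * Complex.exp (-((inner ℝ ξ x : ℝ) : ℂ) * Complex.I)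

/-- The hypothesis that the Fourier transform of `W` is `h(ξ/|ξ|)|ξ|⁻²`, in the sense of
tempered distributions: `∫ W(x) φ̂(x) dx = ∫ h(ξ/|ξ|)|ξ|⁻² φ(ξ) dξ` for every Schwartz `φ`. -/
def FourierRep (Ψ h : E3 → ℝ) : Prop :=
  ∀ φ : SchwartzMap E3 ℂ,
    ∫ x : E3, (W Ψ x : ℂ) * ftransform (fun y => φ y) x
      = ∫ ξ : E3, ((h (‖ξ‖⁻¹ • ξ) : ℝ) : ℂ) * (((‖ξ‖ ^ 2)⁻¹ : ℝ) : ℂ) * φ ξ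

/-- Membership in `SO(3)`. -/
def IsSO3 (R : Matrix (Fin 3) (Fin 3) ℝ) : Prop := R * Rᵀ = 1 ∧ R.det = 1

/-- The solid ellipsoid `R D(a) B̄`. -/
def ellipsoid (a : Fin 3 → ℝ) (R : Matrix (Fin 3) (Fin 3) ℝ) : Set E3 :=
  (Matrix.toEuclideanLin (R * Matrix.diagonal a)) '' Metric.closedBall 0 1

/-- The ellipsoid law: normalised Lebesgue measure on the ellipsoid. -/
def ellipsoidLaw (a : Fin 3 → ℝ) (R : Matrix (Fin 3) (Fin 3) ℝ) : Measure E3 :=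
  (volume (ellipsoid a R))⁻¹ • volume.restrict (ellipsoid a R)

/-- The semi-ellipsoid law supported on the ellipse `R Ẽ₀(a₁,a₂)`: the pushforward under
`(x₁,x₂) ↦ R(x₁,x₂,0)` of the measure on `ℝ²` with density
`(3/(2π a₁ a₂))·√(1 − x₁²/a₁² − x₂²/a₂²)` (the density vanishes outside the ellipse). -/
def semiEllipsoidLaw (a₁ a₂ : ℝ) (R : Matrix (Fin 3) (Fin 3) ℝ) : Measure E3 :=
  Measure.map
    (fun p : ℝ × ℝ =>
      Matrix.toEuclideanLin R ((EuclideanSpace.equiv (Fin 3) ℝ).symm ![p.1, p.2, 0]))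
    ((volume : Measure (ℝ × ℝ)).withDensity fun p =>
      ENNReal.ofReal ((3 / (2 * Real.pi * a₁ * a₂)) *
        Real.sqrt (1 - p.1 ^ 2 / a₁ ^ 2 - p.2 ^ 2 / a₂ ^ 2)))

/-- The quadratic form `Mω·ω`. -/
def qf (M : Matrix (Fin 3) (Fin 3) ℝ) (ω : E3) : ℝ := inner ℝ (Matrix.toEuclideanLin M ω) ω

section Aux

open Filter

lemma det_toEuclideanLin' (M : Matrix (Fin 3) (Fin 3) ℝ) :
    LinearMap.det (Matrix.toEuclideanLin M) = M.det := by
  have h : Matrix.toEuclideanLin M =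
      ((WithLp.linearEquiv 2 ℝ (Fin 3 → ℝ)).symm : (Fin 3 → ℝ) ≃ₗ[ℝ] E3).toLinearMap ∘ₗ
        (Matrix.toLin' M) ∘ₗ
        ((WithLp.linearEquiv 2 ℝ (Fin 3 → ℝ)).symm : (Fin 3 → ℝ) ≃ₗ[ℝ] E3).symm.toLinearMap := rfl
  rw [h, LinearMap.det_conj (Matrix.toLin' M)
    ((WithLp.linearEquiv 2 ℝ (Fin 3 → ℝ)).symm : (Fin 3 → ℝ) ≃ₗ[ℝ] E3)]
  exact LinearMap.det_toLin' M

lemma ellipsoidLaw_integral_eq (b : Fin 3 → ℝ) (hb : ∀ i, 0 < b i) (Q : Matrix (Fin 3) (Fin 3) ℝ)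
    (hQ : Q.det = 1) (f : E3 → ℝ) :
    ∫ x, f x ∂(ellipsoidLaw b Q)
      = (volume (closedBall (0:E3) 1)).toReal⁻¹ *
        ∫ x in closedBall (0:E3) 1, f (Matrix.toEuclideanLin (Q * Matrix.diagonal b) x) := by
  set L := Matrix.toEuclideanLin (Q * Matrix.diagonal b) with hL
  set V := volume (closedBall (0:E3) 1) with hVdef
  have hd : LinearMap.det L = ∏ i, b i := by
    rw [hL, det_toEuclideanLin', Matrix.det_mul, Matrix.det_diagonal, hQ, one_mul]
  have hdpos : 0 < ∏ i, b i := Finset.prod_pos fun i _ => hb i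
  have hdne : LinearMap.det L ≠ 0 := by rw [hd]; exact ne_of_gt hdpos
  have hvol : volume (ellipsoid b Q) = ENNReal.ofReal (∏ i, b i) * V := by
    rw [ellipsoid, ← hL, Measure.addHaar_image_linearMap, hd, abs_of_pos hdpos, hVdef]
  have hVne : V ≠ 0 := (measure_closedBall_pos volume 0 one_pos).ne'
  have hVtop : V ≠ ⊤ := measure_closedBall_lt_top.ne
  have hinj : Set.InjOn L (closedBall (0:E3) 1) := by
    intro x _ y _ hxy
    exact (LinearMap.equivOfDetNeZero L hdne).injective hxy
  have hderiv : ∀ x ∈ closedBall (0:E3) 1,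
      HasFDerivWithinAt (⇑L) (LinearMap.toContinuousLinearMap L) (closedBall (0:E3) 1) x := by
    intro x _
    exact (LinearMap.toContinuousLinearMap L).hasFDerivWithinAt
  have hcv : ∫ x in ellipsoid b Q, f x
      = ∫ x in closedBall (0:E3) 1, |(LinearMap.toContinuousLinearMap L).det| • f (L x) := by
    rw [ellipsoid, ← hL]
    exact integral_image_eq_integral_abs_det_fderiv_smul volume measurableSet_closedBall
      hderiv hinj f
  have hcdet : (LinearMap.toContinuousLinearMap L).det = ∏ i, b i := by
    rw [LinearMap.det_toContinuousLinearMap, hd]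
  rw [ellipsoidLaw]
  rw [integral_smul_measure]
  rw [hcv, hcdet, abs_of_pos hdpos]
  simp only [smul_eq_mul]
  rw [integral_const_mul, hvol]
  rw [ENNReal.mul_inv (Or.inl (by positivity)) (Or.inl (by simp [ENNReal.ofReal_ne_top]))]
  rw [ENNReal.toReal_mul, ENNReal.toReal_inv, ENNReal.toReal_inv, ENNReal.toReal_ofReal hdpos.le]
  have hne := hdpos.ne'
  field_simp

lemma toEuclideanLin_tendsto' (M : ℕ → Matrix (Fin 3) (Fin 3) ℝ)
    (M' : Matrix (Fin 3) (Fin 3) ℝ)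
    (hM : ∀ i j, Tendsto (fun n => M n i j) atTop (nhds (M' i j))) (x : E3) :
    Tendsto (fun n => Matrix.toEuclideanLin (M n) x) atTop
      (nhds (Matrix.toEuclideanLin M' x)) := by
  set v : Fin 3 → ℝ := WithLp.equiv 2 (Fin 3 → ℝ) x with hv
  have h1 : Tendsto (fun n => (M n) *ᵥ v) atTop (nhds (M' *ᵥ v)) := by
    rw [tendsto_pi_nhds]
    intro i
    simp only [Matrix.mulVec, dotProduct]
    exact tendsto_finset_sum _ fun j _ => (hM i j).mul tendsto_const_nhds
  have h2 := ((PiLp.continuous_toLp 2 (fun _ : Fin 3 => ℝ)).tendsto (M' *ᵥ v)).comp h1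
  simp only [Matrix.toEuclideanLin_apply]
  exact h2

lemma ball_integral_tendsto (M : ℕ → Matrix (Fin 3) (Fin 3) ℝ) (M' : Matrix (Fin 3) (Fin 3) ℝ)
    (hM : ∀ i j, Tendsto (fun n => M n i j) atTop (nhds (M' i j)))
    (f : E3 → ℝ) (hf : Continuous f) (C : ℝ) (hC : ∀ x, |f x| ≤ C) :
    Tendsto (fun n => ∫ x in closedBall (0:E3) 1, f (Matrix.toEuclideanLin (M n) x)) atTop
      (nhds (∫ x in closedBall (0:E3) 1, f (Matrix.toEuclideanLin M' x))) := by
  apply tendsto_integral_of_dominated_convergence (fun _ => C)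
  · intro n
    exact (hf.comp (Matrix.toEuclideanLin (M n)).continuous_of_finiteDimensional).aestronglyMeasurable
  · exact integrableOn_const measure_closedBall_lt_top.ne
  · intro n
    exact ae_of_all _ fun x => by simpa [Real.norm_eq_abs] using hC _
  · exact ae_of_all _ fun x =>
      (hf.tendsto _).comp (toEuclideanLin_tendsto' M M' hM x)

lemma line_integral' (s c : ℝ) :
    ∫ t : ℝ, Set.indicator {t : ℝ | t ^ 2 ≤ s} (fun _ => c) t
      = 2 * Real.sqrt s * c := by
  have hmeas : MeasurableSet {t : ℝ | t ^ 2 ≤ s} :=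
    (isClosed_le (by continuity) continuous_const).measurableSet
  rw [integral_indicator hmeas, setIntegral_const, smul_eq_mul]
  rcases le_or_gt 0 s with hs | hs
  · have hset : {t : ℝ | t ^ 2 ≤ s} = Set.Icc (-Real.sqrt s) (Real.sqrt s) := by
      ext t
      simp only [Set.mem_setOf_eq, Set.mem_Icc, ← abs_le]
      constructor
      · intro h
        rw [← Real.sqrt_sq_eq_abs]
        exact Real.sqrt_le_sqrt h
      · intro h
        have h2 := Real.sq_sqrt hs
        nlinarith [abs_nonneg t, sq_abs t]
    rw [hset, measureReal_def, Real.volume_Icc, ENNReal.toReal_ofReal (by nlinarith [Real.sqrt_nonneg s])]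
    ring
  · have hset : {t : ℝ | t ^ 2 ≤ s} = ∅ := by
      ext t
      simp only [Set.mem_setOf_eq, Set.mem_empty_iff_false, iff_false, not_le]
      nlinarith [sq_nonneg t]
    rw [hset, Real.sqrt_eq_zero'.mpr hs.le]
    simp

lemma ball_fubini (φ : ℝ × ℝ → ℝ) (hφ : Continuous φ) (C : ℝ) (hC : ∀ p, |φ p| ≤ C) :
    ∫ x in closedBall (0:E3) 1, φ (x 0, x 1)
      = ∫ p : ℝ × ℝ, 2 * Real.sqrt (1 - p.1 ^ 2 - p.2 ^ 2) * φ p := by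
  classical
  -- Step 1 : to the pi type
  have hmem : ∀ x : E3, x ∈ closedBall (0:E3) 1 ↔ x 0 ^ 2 + x 1 ^ 2 + x 2 ^ 2 ≤ 1 := by
    intro x
    rw [mem_closedBall_zero_iff, EuclideanSpace.norm_eq, show (1:ℝ) = Real.sqrt 1 by simp,
      Real.sqrt_le_sqrt_iff (by positivity)]
    simp [Fin.sum_univ_three, Real.norm_eq_abs, sq_abs]
  set ψ : (Fin 3 → ℝ) → ℝ := fun y =>
    Set.indicator {y : Fin 3 → ℝ | y 0 ^ 2 + y 1 ^ 2 + y 2 ^ 2 ≤ 1} (fun y => φ (y 0, y 1)) y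
    with hψ
  have h1 : ∫ x in closedBall (0:E3) 1, φ (x 0, x 1) = ∫ y : Fin 3 → ℝ, ψ y := by
    rw [← integral_indicator (measurableSet_closedBall)]
    rw [← ((EuclideanSpace.volume_preserving_symm_measurableEquiv_toLp (Fin 3)).symm).integral_comp
      (MeasurableEquiv.measurableEmbedding _)
      (Set.indicator (closedBall (0:E3) 1) (fun x => φ (x 0, x 1)))]
    congr 1
    funext y
    rw [hψ]
    simp only [Set.indicator_apply]
    have : ((MeasurableEquiv.toLp 2 (Fin 3 → ℝ)).symm.symm y ∈ closedBall (0:E3) 1)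
        ↔ (y ∈ {y : Fin 3 → ℝ | y 0 ^ 2 + y 1 ^ 2 + y 2 ^ 2 ≤ 1}) := by
      rw [hmem]; rfl
    exact if_congr this rfl rfl
  -- Step 2 : split off the last coordinate
  set S : Set (ℝ × (Fin 2 → ℝ)) := {z | z.2 0 ^ 2 + z.2 1 ^ 2 + z.1 ^ 2 ≤ 1} with hS
  set F : ℝ × (Fin 2 → ℝ) → ℝ := fun z => φ (z.2 0, z.2 1) with hF
  have h2 : ∫ y : Fin 3 → ℝ, ψ y = ∫ z : ℝ × (Fin 2 → ℝ), Set.indicator S F z := by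
    rw [← ((volume_preserving_piFinSuccAbove (fun _ : Fin 3 => ℝ) 2).symm).integral_comp
      (MeasurableEquiv.measurableEmbedding _) ψ]
    congr 1
  -- integrability
  have hc0 : Continuous fun z : ℝ × (Fin 2 → ℝ) => z.2 0 := (continuous_apply 0).comp continuous_snd
  have hc1 : Continuous fun z : ℝ × (Fin 2 → ℝ) => z.2 1 := (continuous_apply 1).comp continuous_snd
  have hcont2 : Continuous fun z : ℝ × (Fin 2 → ℝ) => z.2 0 ^ 2 + z.2 1 ^ 2 + z.1 ^ 2 :=
    ((hc0.pow 2).add (hc1.pow 2)).add (continuous_fst.pow 2)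
  have hSmeas : MeasurableSet S := (isClosed_le hcont2 continuous_const).measurableSet
  have hSfin : volume S ≠ ⊤ := by
    have hsub : S ⊆ Set.Icc (-1:ℝ) 1 ×ˢ Set.pi Set.univ (fun _ : Fin 2 => Set.Icc (-1:ℝ) 1) := by
      rintro ⟨t, y⟩ hz
      simp only [hS, Set.mem_setOf_eq] at hz
      constructor
      · exact Set.mem_Icc.2 ⟨by nlinarith [sq_nonneg (t+1), sq_nonneg (y 0), sq_nonneg (y 1)],
          by nlinarith [sq_nonneg (t-1), sq_nonneg (y 0), sq_nonneg (y 1)]⟩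
      · intro i _
        fin_cases i
        · show y 0 ∈ Set.Icc (-1:ℝ) 1
          exact Set.mem_Icc.2 ⟨by nlinarith [sq_nonneg (y 0 + 1), sq_nonneg t, sq_nonneg (y 1)],
            by nlinarith [sq_nonneg (y 0 - 1), sq_nonneg t, sq_nonneg (y 1)]⟩
        · show y 1 ∈ Set.Icc (-1:ℝ) 1
          exact Set.mem_Icc.2 ⟨by nlinarith [sq_nonneg (y 1 + 1), sq_nonneg t, sq_nonneg (y 0)],
            by nlinarith [sq_nonneg (y 1 - 1), sq_nonneg t, sq_nonneg (y 0)]⟩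
    refine ne_top_of_le_ne_top ?_ (measure_mono hsub)
    rw [Measure.volume_eq_prod, Measure.prod_prod, Real.volume_Icc, volume_pi_pi]
    simp only [Real.volume_Icc]
    norm_num
  have hFcont : Continuous F := by
    apply hφ.comp
    exact ((continuous_apply 0).comp continuous_snd).prodMk ((continuous_apply 1).comp continuous_snd)
  have hint : Integrable (Set.indicator S F) := by
    refine (Measure.integrableOn_of_bounded (M := C) hSfin hFcont.aestronglyMeasurable ?_).integrable_indicator hSmeas
    exact ae_of_all _ fun z => by simpa [Real.norm_eq_abs] using hC _
  -- Step 3 : Fubini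
  have h3 : ∫ z : ℝ × (Fin 2 → ℝ), Set.indicator S F z
      = ∫ y : Fin 2 → ℝ, 2 * Real.sqrt (1 - y 0 ^ 2 - y 1 ^ 2) * φ (y 0, y 1) := by
    rw [Measure.volume_eq_prod] at hint ⊢
    rw [integral_prod_symm _ hint]
    congr 1
    funext y
    have hslice : ∀ t : ℝ, Set.indicator S F (t, y)
        = Set.indicator {t : ℝ | t ^ 2 ≤ 1 - y 0 ^ 2 - y 1 ^ 2} (fun _ => φ (y 0, y 1)) t := by
      intro t
      simp only [Set.indicator_apply, hS, hF, Set.mem_setOf_eq]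
      have hiff : y 0 ^ 2 + y 1 ^ 2 + t ^ 2 ≤ 1 ↔ t ^ 2 ≤ 1 - y 0 ^ 2 - y 1 ^ 2 := by
        constructor <;> intro <;> linarith
      exact if_congr hiff rfl rfl
    simp only [hslice]
    exact line_integral' _ _
  -- Step 4 : to ℝ × ℝ
  have h4 : ∫ y : Fin 2 → ℝ, 2 * Real.sqrt (1 - y 0 ^ 2 - y 1 ^ 2) * φ (y 0, y 1)
      = ∫ p : ℝ × ℝ, 2 * Real.sqrt (1 - p.1 ^ 2 - p.2 ^ 2) * φ p := by
    rw [← ((volume_preserving_finTwoArrow ℝ).symm).integral_comp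
      (MeasurableEquiv.measurableEmbedding _)
      (fun y : Fin 2 → ℝ => 2 * Real.sqrt (1 - y 0 ^ 2 - y 1 ^ 2) * φ (y 0, y 1))]
    congr 1
  rw [h1, h2, h3, h4]

lemma scale2 {a₁ a₂ : ℝ} (ha₁ : 0 < a₁) (ha₂ : 0 < a₂) (h : ℝ × ℝ → ℝ)
    (hint : Integrable h (volume : Measure (ℝ × ℝ)))
    (hint2 : Integrable (fun p : ℝ × ℝ => h (a₁ * p.1, a₂ * p.2)) (volume : Measure (ℝ × ℝ))) :
    ∫ p : ℝ × ℝ, h (a₁ * p.1, a₂ * p.2) = (a₁ * a₂)⁻¹ * ∫ p : ℝ × ℝ, h p := by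
  rw [Measure.volume_eq_prod] at hint hint2 ⊢
  rw [integral_prod _ hint2, integral_prod _ hint]
  have inner : ∀ x : ℝ, ∫ y : ℝ, h (a₁ * x, a₂ * y) = |a₂⁻¹| • ∫ y : ℝ, h (a₁ * x, y) :=
    fun x => Measure.integral_comp_mul_left (fun y => h (a₁ * x, y)) a₂
  simp only [inner]
  rw [integral_smul]
  have outer : ∫ x : ℝ, (fun u => ∫ y : ℝ, h (u, y)) (a₁ * x)
      = |a₁⁻¹| • ∫ u : ℝ, ∫ y : ℝ, h (u, y) :=
    Measure.integral_comp_mul_left (fun u => ∫ y : ℝ, h (u, y)) a₁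
  rw [show (∫ x : ℝ, ∫ y : ℝ, h (a₁ * x, y)) = ∫ x : ℝ, (fun u => ∫ y : ℝ, h (u, y)) (a₁ * x) from rfl,
    outer, smul_smul, smul_eq_mul, abs_of_pos (inv_pos.2 ha₂), abs_of_pos (inv_pos.2 ha₁)]
  rw [mul_inv]
  ring

lemma Vball : volume (closedBall (0:E3) 1) = ENNReal.ofReal (4 / 3 * Real.pi) := by
  rw [EuclideanSpace.volume_closedBall]
  simp only [Fintype.card_fin]
  rw [ENNReal.ofReal_one, one_pow, one_mul]
  congr 1
  have hcast : ((3:ℕ):ℝ) / 2 + 1 = 3 / 2 + 1 := by norm_num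
  rw [hcast]
  have h1 : Real.Gamma (3 / 2 + 1) = 3 / 2 * Real.Gamma (3 / 2) :=
    Real.Gamma_add_one (by norm_num)
  have h2 : Real.Gamma (3 / 2) = 1 / 2 * Real.Gamma (1 / 2) := by
    rw [show (3:ℝ)/2 = 1/2 + 1 by norm_num]
    exact Real.Gamma_add_one (by norm_num)
  rw [h1, h2, Real.Gamma_one_half_eq]
  have hs : Real.sqrt Real.pi ^ 3 = Real.pi * Real.sqrt Real.pi := by
    rw [pow_succ, Real.sq_sqrt Real.pi_pos.le]
  rw [hs]
  have hne : Real.sqrt Real.pi ≠ 0 := (Real.sqrt_pos.2 Real.pi_pos).ne'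
  field_simp
  ring

lemma Llim_apply (a₁ a₂ : ℝ) (Q : Matrix (Fin 3) (Fin 3) ℝ) (x : E3) :
    Matrix.toEuclideanLin (Q * Matrix.diagonal ![a₁, a₂, 0]) x
      = Matrix.toEuclideanLin Q
          ((EuclideanSpace.equiv (Fin 3) ℝ).symm ![a₁ * x 0, a₂ * x 1, 0]) := by
  rw [Matrix.toEuclideanLin_apply, Matrix.toEuclideanLin_apply]
  congr 1
  rw [← Matrix.mulVec_mulVec]
  have heq : WithLp.ofLp ((EuclideanSpace.equiv (Fin 3) ℝ).symm ![a₁ * x 0, a₂ * x 1, 0])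
      = ![a₁ * x 0, a₂ * x 1, 0] := rfl
  rw [heq]
  have hdv : Matrix.diagonal ![a₁, a₂, 0] *ᵥ WithLp.ofLp x
      = ![a₁ * x 0, a₂ * x 1, 0] := by
    funext i
    rw [Matrix.mulVec_diagonal]
    fin_cases i <;> simp
  rw [hdv]

lemma integrable_of_vanish {h : ℝ × ℝ → ℝ} (hh : Continuous h) {K : Set (ℝ × ℝ)}
    (hK : IsCompact K) (h0 : ∀ p ∉ K, h p = 0) : Integrable h (volume : Measure (ℝ × ℝ)) :=
  hh.integrable_of_hasCompactSupport (HasCompactSupport.intro hK h0)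

end Aux

/-- if `aⁿ → (a₁, a₂, 0)` with `a₁, a₂ > 0` and `Rⁿ → R` in `SO(3)`, then the
ellipsoid laws of `Eⁿ = Rⁿ D(aⁿ) B̄` converge narrowly to the semi-ellipsoid law associated
with `(a₁, a₂, R)`. -/
theorem ellipsoidLaw_tendsto_semiEllipsoidLaw
    (a₁ a₂ : ℝ) (ha₁ : 0 < a₁) (ha₂ : 0 < a₂)
    (a : ℕ → Fin 3 → ℝ) (ha : ∀ n i, 0 < a n i)
    (R : ℕ → Matrix (Fin 3) (Fin 3) ℝ) (hRn : ∀ n, IsSO3 (R n))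
    (Rlim : Matrix (Fin 3) (Fin 3) ℝ) (hRlim : IsSO3 Rlim)
    (haconv0 : Filter.Tendsto (fun n => a n 0) Filter.atTop (nhds a₁))
    (haconv1 : Filter.Tendsto (fun n => a n 1) Filter.atTop (nhds a₂))
    (haconv2 : Filter.Tendsto (fun n => a n 2) Filter.atTop (nhds 0))
    (hRconv : ∀ i j : Fin 3,
      Filter.Tendsto (fun n => R n i j) Filter.atTop (nhds (Rlim i j)))
    (f : E3 → ℝ) (hf : Continuous f) (hfb : ∃ C : ℝ, ∀ x, |f x| ≤ C) :
    Filter.Tendsto (fun n => ∫ x, f x ∂(ellipsoidLaw (a n) (R n))) Filter.atTop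
      (nhds ((3 / (2 * Real.pi * a₁ * a₂)) *
        ∫ p in {p : ℝ × ℝ | p.1 ^ 2 / a₁ ^ 2 + p.2 ^ 2 / a₂ ^ 2 ≤ 1},
          f (Matrix.toEuclideanLin Rlim
              ((EuclideanSpace.equiv (Fin 3) ℝ).symm ![p.1, p.2, 0])) *
            Real.sqrt (1 - p.1 ^ 2 / a₁ ^ 2 - p.2 ^ 2 / a₂ ^ 2))) := by
  obtain ⟨C, hC⟩ := hfb
  set c : ℝ := (volume (closedBall (0:E3) 1)).toReal⁻¹ with hc
  set M : ℕ → Matrix (Fin 3) (Fin 3) ℝ := fun n => R n * Matrix.diagonal (a n) with hM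
  set M' : Matrix (Fin 3) (Fin 3) ℝ := Rlim * Matrix.diagonal ![a₁, a₂, 0] with hM'
  -- entrywise convergence
  have haconv : ∀ j : Fin 3, Filter.Tendsto (fun n => a n j) Filter.atTop
      (nhds (![a₁, a₂, 0] j)) := by
    intro j
    fin_cases j
    · simpa using haconv0
    · simpa using haconv1
    · simpa using haconv2
  have hMconv : ∀ i j, Filter.Tendsto (fun n => M n i j) Filter.atTop (nhds (M' i j)) := by
    intro i j
    simp only [hM, hM', Matrix.mul_diagonal]
    exact (hRconv i j).mul (haconv j)
  -- rewrite as ball integrals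
  have hrw : (fun n => ∫ x, f x ∂(ellipsoidLaw (a n) (R n)))
      = fun n => c * ∫ x in closedBall (0:E3) 1, f (Matrix.toEuclideanLin (M n) x) :=
    funext fun n => ellipsoidLaw_integral_eq (a n) (ha n) (R n) (hRn n).2 f
  -- the auxiliary functions
  set g : ℝ × ℝ → ℝ := fun p =>
    f (Matrix.toEuclideanLin Rlim ((EuclideanSpace.equiv (Fin 3) ℝ).symm ![p.1, p.2, 0])) with hg
  have hvec : Continuous fun p : ℝ × ℝ => ![p.1, p.2, (0:ℝ)] := by
    apply continuous_pi
    intro i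
    fin_cases i
    · simpa using continuous_fst
    · simpa using continuous_snd
    · simpa using (continuous_const : Continuous fun _ : ℝ × ℝ => (0:ℝ))
  have hgcont : Continuous g := by
    apply hf.comp
    apply (Matrix.toEuclideanLin Rlim).continuous_of_finiteDimensional.comp
    exact ((EuclideanSpace.equiv (Fin 3) ℝ).symm :
      (Fin 3 → ℝ) →L[ℝ] E3).continuous.comp hvec
  have hgC : ∀ p, |g p| ≤ C := fun p => hC _
  set φ : ℝ × ℝ → ℝ := fun p => g (a₁ * p.1, a₂ * p.2) with hφ
  have hφcont : Continuous φ :=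
    hgcont.comp ((continuous_const.mul continuous_fst).prodMk (continuous_const.mul continuous_snd))
  have hφC : ∀ p, |φ p| ≤ C := fun p => hgC _
  -- the weight functions
  set h2 : ℝ × ℝ → ℝ := fun q =>
    2 * Real.sqrt (1 - q.1 ^ 2 / a₁ ^ 2 - q.2 ^ 2 / a₂ ^ 2) * g q with hh2
  have hsqc : Continuous fun q : ℝ × ℝ => 1 - q.1 ^ 2 / a₁ ^ 2 - q.2 ^ 2 / a₂ ^ 2 := by
    apply Continuous.sub
    apply Continuous.sub continuous_const
    · exact (continuous_fst.pow 2).div_const _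
    · exact (continuous_snd.pow 2).div_const _
  have hh2cont : Continuous h2 :=
    ((continuous_const.mul (Real.continuous_sqrt.comp hsqc)).mul hgcont)
  -- integrability of h2 and its rescaling
  have hint : Integrable h2 (volume : Measure (ℝ × ℝ)) := by
    apply integrable_of_vanish hh2cont (isCompact_Icc.prod isCompact_Icc :
      IsCompact (Set.Icc (-a₁) a₁ ×ˢ Set.Icc (-a₂) a₂))
    intro p hp
    have hneg : 1 - p.1 ^ 2 / a₁ ^ 2 - p.2 ^ 2 / a₂ ^ 2 ≤ 0 := by
      rcases not_and_or.1 (fun hmem => hp (Set.mem_prod.2 hmem)) with h | h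
      · rw [Set.mem_Icc, not_and_or] at h
        have h1 : a₁ ^ 2 ≤ p.1 ^ 2 := by
          rcases h with h | h
          · push_neg at h; nlinarith
          · push_neg at h; nlinarith
        have : (1:ℝ) ≤ p.1 ^ 2 / a₁ ^ 2 := (one_le_div (by positivity)).2 h1
        have hnn : 0 ≤ p.2 ^ 2 / a₂ ^ 2 := by positivity
        linarith
      · rw [Set.mem_Icc, not_and_or] at h
        have h1 : a₂ ^ 2 ≤ p.2 ^ 2 := by
          rcases h with h | h
          · push_neg at h; nlinarith
          · push_neg at h; nlinarith
        have : (1:ℝ) ≤ p.2 ^ 2 / a₂ ^ 2 := (one_le_div (by positivity)).2 h1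
        have hnn : 0 ≤ p.1 ^ 2 / a₁ ^ 2 := by positivity
        linarith
    simp only [hh2]
    rw [Real.sqrt_eq_zero'.mpr hneg]
    ring
  have hsq_comp : ∀ p : ℝ × ℝ, h2 (a₁ * p.1, a₂ * p.2)
      = 2 * Real.sqrt (1 - p.1 ^ 2 - p.2 ^ 2) * φ p := by
    intro p
    simp only [hh2, hφ]
    congr 3
    rw [mul_pow, mul_pow]
    field_simp
  have hcompcont : Continuous fun p : ℝ × ℝ => h2 (a₁ * p.1, a₂ * p.2) :=
    hh2cont.comp ((continuous_const.mul continuous_fst).prodMk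
      (continuous_const.mul continuous_snd))
  have hint2 : Integrable (fun p : ℝ × ℝ => h2 (a₁ * p.1, a₂ * p.2))
      (volume : Measure (ℝ × ℝ)) := by
    apply integrable_of_vanish hcompcont
      (isCompact_Icc.prod isCompact_Icc :
        IsCompact (Set.Icc (-(1:ℝ)) 1 ×ˢ Set.Icc (-(1:ℝ)) 1))
    intro p hp
    show h2 (a₁ * p.1, a₂ * p.2) = 0
    have hneg : 1 - p.1 ^ 2 - p.2 ^ 2 ≤ 0 := by
      rcases not_and_or.1 (fun hmem => hp (Set.mem_prod.2 hmem)) with h | h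
      · rw [Set.mem_Icc, not_and_or] at h
        have h1 : (1:ℝ) ≤ p.1 ^ 2 := by
          rcases h with h | h
          · push_neg at h; nlinarith
          · push_neg at h; nlinarith
        nlinarith [sq_nonneg p.2]
      · rw [Set.mem_Icc, not_and_or] at h
        have h1 : (1:ℝ) ≤ p.2 ^ 2 := by
          rcases h with h | h
          · push_neg at h; nlinarith
          · push_neg at h; nlinarith
        nlinarith [sq_nonneg p.1]
    rw [hsq_comp p]
    rw [Real.sqrt_eq_zero'.mpr hneg]
    ring
  -- identification of the limit value
  have hvalue : c * (∫ x in closedBall (0:E3) 1, f (Matrix.toEuclideanLin M' x))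
      = (3 / (2 * Real.pi * a₁ * a₂)) *
        ∫ p in {p : ℝ × ℝ | p.1 ^ 2 / a₁ ^ 2 + p.2 ^ 2 / a₂ ^ 2 ≤ 1},
          f (Matrix.toEuclideanLin Rlim
              ((EuclideanSpace.equiv (Fin 3) ℝ).symm ![p.1, p.2, 0])) *
            Real.sqrt (1 - p.1 ^ 2 / a₁ ^ 2 - p.2 ^ 2 / a₂ ^ 2) := by
    -- rewrite the ball integrand
    have hpt : ∀ x : E3, f (Matrix.toEuclideanLin M' x) = φ (x 0, x 1) := by
      intro x
      rw [hM', Llim_apply]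
    have hball : ∫ x in closedBall (0:E3) 1, f (Matrix.toEuclideanLin M' x)
        = ∫ p : ℝ × ℝ, 2 * Real.sqrt (1 - p.1 ^ 2 - p.2 ^ 2) * φ p := by
      rw [show (fun x : E3 => f (Matrix.toEuclideanLin M' x)) = fun x => φ (x 0, x 1) from
        funext hpt] at *
      · exact ball_fubini φ hφcont C hφC
    have hscaled : ∫ p : ℝ × ℝ, 2 * Real.sqrt (1 - p.1 ^ 2 - p.2 ^ 2) * φ p
        = (a₁ * a₂)⁻¹ * ∫ p : ℝ × ℝ, h2 p := by
      rw [show (fun p : ℝ × ℝ => 2 * Real.sqrt (1 - p.1 ^ 2 - p.2 ^ 2) * φ p)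
        = fun p : ℝ × ℝ => h2 (a₁ * p.1, a₂ * p.2) from funext fun p => (hsq_comp p).symm]
      exact scale2 ha₁ ha₂ h2 hint hint2
    -- the set integral is the full integral
    have hset : ∫ p in {p : ℝ × ℝ | p.1 ^ 2 / a₁ ^ 2 + p.2 ^ 2 / a₂ ^ 2 ≤ 1},
          f (Matrix.toEuclideanLin Rlim
              ((EuclideanSpace.equiv (Fin 3) ℝ).symm ![p.1, p.2, 0])) *
            Real.sqrt (1 - p.1 ^ 2 / a₁ ^ 2 - p.2 ^ 2 / a₂ ^ 2)
        = ∫ p : ℝ × ℝ, f (Matrix.toEuclideanLin Rlim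
              ((EuclideanSpace.equiv (Fin 3) ℝ).symm ![p.1, p.2, 0])) *
            Real.sqrt (1 - p.1 ^ 2 / a₁ ^ 2 - p.2 ^ 2 / a₂ ^ 2) := by
      apply setIntegral_eq_integral_of_forall_compl_eq_zero
      intro p hp
      simp only [Set.mem_setOf_eq, not_le] at hp
      rw [Real.sqrt_eq_zero'.mpr (by linarith), mul_zero]
    have hh2int : ∫ p : ℝ × ℝ, h2 p
        = 2 * ∫ p : ℝ × ℝ, f (Matrix.toEuclideanLin Rlim
              ((EuclideanSpace.equiv (Fin 3) ℝ).symm ![p.1, p.2, 0])) *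
            Real.sqrt (1 - p.1 ^ 2 / a₁ ^ 2 - p.2 ^ 2 / a₂ ^ 2) := by
      rw [← integral_const_mul]
      congr 1
      funext p
      simp only [hh2, hg]
      ring
    rw [hball, hscaled, hh2int, hset]
    have hcV : c = 3 / (4 * Real.pi) := by
      rw [hc, Vball, ENNReal.toReal_ofReal (by positivity)]
      rw [eq_div_iff (by positivity)]
      field_simp
    rw [hcV]
    have hπ : Real.pi ≠ 0 := Real.pi_pos.ne'
    field_simp
    ring
  rw [hrw, ← hvalue]
  exact (ball_integral_tendsto M M' hMconv f hf C hC).const_mul c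

end
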